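/- The commutator subgroup of SL(2,ℤ) is a free group, freely generated by [[1,1],[1,2]] and [[2,1],[1,1]]. -/

import Mathlib

abbrev SL2Z := Matrix.SpecialLinearGroup (Fin 2) ℤ

def C : SL2Z := ⟨!![1, 1; 1, 2], by decide⟩
def D : SL2Z := ⟨!![2, 1; 1, 1], by decide⟩

open ModularGroup
open scoped commutatorElement

namespace Stmt19


abbrev V : Type := {v : ℤ × ℤ // v ≠ 0}

lemma det_coords (g : SL2Z) : g.1 0 0 * g.1 1 1 - g.1 0 1 * g.1 1 0 = 1 := by
  have := g.2
  rwa [Matrix.det_fin_two] at this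

instance : SMul SL2Z V :=
  ⟨fun g v => ⟨(g.1 0 0 * v.1.1 + g.1 0 1 * v.1.2, g.1 1 0 * v.1.1 + g.1 1 1 * v.1.2), by
    have hd := det_coords g
    intro h
    rw [Prod.ext_iff] at h
    simp only [Prod.fst_zero, Prod.snd_zero] at h
    obtain ⟨h1, h2⟩ := h
    apply v.2
    have hx : v.1.1 = 0 := by linear_combination g.1 1 1 * h1 - g.1 0 1 * h2 - v.1.1 * hd
    have hy : v.1.2 = 0 := by linear_combination -g.1 1 0 * h1 + g.1 0 0 * h2 - v.1.2 * hd
    exact Prod.ext hx hy⟩⟩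

lemma smul_coords (g : SL2Z) (v : V) :
    (g • v).1 = (g.1 0 0 * v.1.1 + g.1 0 1 * v.1.2, g.1 1 0 * v.1.1 + g.1 1 1 * v.1.2) := rfl

instance : MulAction SL2Z V where
  one_smul v := by
    apply Subtype.ext
    rw [smul_coords]
    have h0 : ((1 : SL2Z) : Matrix (Fin 2) (Fin 2) ℤ) = 1 := rfl
    simp [h0, Matrix.one_apply]
  mul_smul g h v := by
    apply Subtype.ext
    rw [smul_coords, smul_coords, smul_coords]
    have hc : ∀ i j, ((g * h : SL2Z) : Matrix (Fin 2) (Fin 2) ℤ) i j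
        = g.1 i 0 * h.1 0 j + g.1 i 1 * h.1 1 j := by
      intro i j
      rw [Matrix.SpecialLinearGroup.coe_mul, Matrix.mul_apply, Fin.sum_univ_two]
    refine Prod.ext ?_ ?_ <;> simp only [hc] <;> ring

def a : Bool → SL2Z := fun b => if b then C else D

def X : Bool → Set V
  | true => {v | (0 < v.1.1 ∧ v.1.1 ≤ v.1.2) ∨ (v.1.1 < 0 ∧ v.1.2 ≤ v.1.1)}
  | false => {v | (0 < v.1.1 ∧ 0 ≤ v.1.2 ∧ v.1.2 < v.1.1) ∨ (v.1.1 < 0 ∧ v.1.1 < v.1.2 ∧ v.1.2 ≤ 0)}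

def Y : Bool → Set V
  | true => {v | (0 < v.1.1 ∧ -v.1.1 ≤ v.1.2 ∧ v.1.2 < 0) ∨ (v.1.1 < 0 ∧ 0 < v.1.2 ∧ v.1.2 ≤ -v.1.1)}
  | false => {v | v.1.1 = 0 ∨ (0 < v.1.1 ∧ v.1.2 < -v.1.1) ∨ (v.1.1 < 0 ∧ -v.1.1 < v.1.2)}

lemma ne_zero_coords (v : V) : ¬(v.1.1 = 0 ∧ v.1.2 = 0) := by
  intro h
  exact v.2 (Prod.ext h.1 h.2)

open scoped Pointwise in
lemma injective_lift : Function.Injective (FreeGroup.lift a) := by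
  apply FreeGroup.injective_lift_of_ping_pong a X Y
  · intro b
    cases b
    · exact ⟨⟨(1, 0), by simp⟩, by simp [X]⟩
    · exact ⟨⟨(1, 1), by simp⟩, by simp [X]⟩
  · intro i j hij
    cases i <;> cases j <;> (try exact absurd rfl hij) <;>
      · show Disjoint _ _
        rw [Set.disjoint_left]
        intro v h1 h2
        simp only [X, Set.mem_setOf_eq] at h1 h2
        omega
  · intro i j hij
    cases i <;> cases j <;> (try exact absurd rfl hij) <;>
      · show Disjoint _ _
        rw [Set.disjoint_left]
        intro v h1 h2
        simp only [Y, Set.mem_setOf_eq] at h1 h2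
        omega
  · intro i j
    cases i <;> cases j <;>
      · rw [Set.disjoint_left]
        intro v h1 h2
        simp only [X, Y, Set.mem_setOf_eq] at h1 h2
        omega
  · intro i
    rintro z ⟨w, hw, rfl⟩
    have hnz := ne_zero_coords w
    cases i
    · have hc : ((a false • w : V)).1 = (2 * w.1.1 + 1 * w.1.2, 1 * w.1.1 + 1 * w.1.2) := by
        rw [smul_coords]; rfl
      simp only [X, Y, Set.mem_compl_iff, Set.mem_setOf_eq] at hw ⊢
      rw [hc]
      dsimp only
      omega
    · have hc : ((a true • w : V)).1 = (1 * w.1.1 + 1 * w.1.2, 1 * w.1.1 + 2 * w.1.2) := by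
        rw [smul_coords]; rfl
      simp only [X, Y, Set.mem_compl_iff, Set.mem_setOf_eq] at hw ⊢
      rw [hc]
      dsimp only
      omega
  · intro i
    rintro z ⟨w, hw, rfl⟩
    have hnz := ne_zero_coords w
    cases i
    · have hc : (((a⁻¹) false • w : V)).1 = (1 * w.1.1 + -1 * w.1.2, -1 * w.1.1 + 2 * w.1.2) := by
        rw [smul_coords]
        simp only [Pi.inv_apply, a, Bool.false_eq_true, ↓reduceIte, Matrix.SpecialLinearGroup.coe_inv, Matrix.adjugate_fin_two]
        norm_num [a, C, D]
      simp only [X, Y, Set.mem_compl_iff, Set.mem_setOf_eq] at hw ⊢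
      rw [hc]
      dsimp only
      omega
    · have hc : (((a⁻¹) true • w : V)).1 = (2 * w.1.1 + -1 * w.1.2, -1 * w.1.1 + 1 * w.1.2) := by
        rw [smul_coords]
        simp only [Pi.inv_apply, a, Bool.false_eq_true, ↓reduceIte, Matrix.SpecialLinearGroup.coe_inv, Matrix.adjugate_fin_two]
        norm_num [a, C, D]
      simp only [X, Y, Set.mem_compl_iff, Set.mem_setOf_eq] at hw ⊢
      rw [hc]
      dsimp only
      omega



lemma coe_entries_mul (g h : SL2Z) (i j : Fin 2) :
    ((g * h : SL2Z) : Matrix (Fin 2) (Fin 2) ℤ) i j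
      = g.1 i 0 * h.1 0 j + g.1 i 1 * h.1 1 j := by
  rw [Matrix.SpecialLinearGroup.coe_mul, Matrix.mul_apply, Fin.sum_univ_two]

lemma det_coords' (g : SL2Z) : g.1 0 0 * g.1 1 1 - g.1 0 1 * g.1 1 0 = 1 := by
  have := g.2
  rwa [Matrix.det_fin_two] at this

lemma mem_closure_ST (g : SL2Z) : g ∈ Subgroup.closure ({S, T} : Set SL2Z) := by
  set H := Subgroup.closure ({S, T} : Set SL2Z) with hH
  have hS : S ∈ H := Subgroup.subset_closure (Set.mem_insert _ _)
  have hT : T ∈ H := Subgroup.subset_closure (Set.mem_insert_of_mem _ rfl)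
  suffices key : ∀ n : ℕ, ∀ g : SL2Z, (g.1 1 0).natAbs = n → g ∈ H by
    exact key _ g rfl
  intro n
  induction n using Nat.strong_induction_on with
  | _ n ih =>
    intro g hg
    rcases eq_or_ne (g.1 1 0) 0 with hc | hc
    · -- lower-left is zero
      have hd := det_coords' g
      rw [hc, mul_zero, sub_zero] at hd
      rcases Int.mul_eq_one_iff_eq_one_or_neg_one.mp hd with ⟨h1, h2⟩ | ⟨h1, h2⟩
      · have : g = T ^ (g.1 0 1) := by
          apply Subtype.ext
          rw [coe_T_zpow]
          ext i j
          fin_cases i <;> fin_cases j <;> simp [h1, h2, hc]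
        rw [this]
        exact zpow_mem hT _
      · have hrhs : ((S * S * T ^ (-(g.1 0 1)) : SL2Z)).1 = -!![1, -(g.1 0 1); 0, 1] := by
          rw [Matrix.SpecialLinearGroup.coe_mul, Matrix.SpecialLinearGroup.coe_mul,
            S_mul_S_eq, coe_T_zpow, neg_one_mul]
        have : g = S * S * T ^ (-(g.1 0 1)) := by
          apply Subtype.ext
          rw [hrhs]
          ext i j
          fin_cases i <;> fin_cases j <;> simp [h1, h2, hc, Matrix.neg_apply]
        rw [this]
        exact mul_mem (mul_mem hS hS) (zpow_mem hT _)
    · -- lower-left nonzero: reduce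
      have hdiv := Int.emod_add_mul_ediv (g.1 0 0) (g.1 1 0)
      have h0 : 0 ≤ g.1 0 0 % g.1 1 0 := Int.emod_nonneg _ hc
      have h1 : g.1 0 0 % g.1 1 0 < |g.1 1 0| := by rw [Int.abs_eq_natAbs]; exact Int.emod_lt _ hc
      rw [Int.abs_eq_natAbs] at h1
      set q := g.1 0 0 / g.1 1 0 with hq
      have hentry : ((S * T ^ (-q) * g : SL2Z)).1 1 0 = g.1 0 0 % g.1 1 0 := by
        rw [coe_entries_mul, coe_entries_mul, coe_entries_mul, coe_S, coe_T_zpow]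
        simp
        linarith [hdiv]
      have hlt : (((S * T ^ (-q) * g : SL2Z)).1 1 0).natAbs < n := by
        rw [hentry]
        omega
      have hmem := ih _ hlt (S * T ^ (-q) * g) rfl
      have hgeq : g = T ^ q * S⁻¹ * (S * T ^ (-q) * g) := by group
      rw [hgeq]
      exact mul_mem (mul_mem (zpow_mem hT q) (inv_mem hS)) hmem




def N : Subgroup SL2Z := Subgroup.closure {C, D}

lemma C_mem : C ∈ N := Subgroup.subset_closure (Set.mem_insert _ _)
lemma D_mem : D ∈ N := Subgroup.subset_closure (Set.mem_insert_of_mem _ rfl)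

lemma SCS : S * C * S⁻¹ = C⁻¹ := Subtype.ext (by decide)
lemma SDS : S * D * S⁻¹ = D⁻¹ := Subtype.ext (by decide)
lemma SCS' : S⁻¹ * C * S⁻¹⁻¹ = C⁻¹ := Subtype.ext (by decide)
lemma SDS' : S⁻¹ * D * S⁻¹⁻¹ = D⁻¹ := Subtype.ext (by decide)
lemma TCT : T * C * T⁻¹ = D := Subtype.ext (by decide)
lemma TDT : T * D * T⁻¹ = D * C⁻¹ := Subtype.ext (by decide)
lemma TCT' : T⁻¹ * C * T⁻¹⁻¹ = D⁻¹ * C := Subtype.ext (by decide)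
lemma TDT' : T⁻¹ * D * T⁻¹⁻¹ = C := Subtype.ext (by decide)
lemma TS_comm : ⁅T, S⁆ = D := Subtype.ext (by decide)
lemma ST_comm : ⁅S, T⁆ = D⁻¹ := Subtype.ext (by decide)

lemma conj_mem_of_gen (g : SL2Z) (h1 : g * C * g⁻¹ ∈ N) (h2 : g * D * g⁻¹ ∈ N) :
    ∀ n ∈ N, g * n * g⁻¹ ∈ N := by
  have hle : N ≤ N.comap (MulAut.conj g).toMonoidHom := by
    apply (Subgroup.closure_le (K := N.comap (MulAut.conj g).toMonoidHom)).mpr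
    rintro x (rfl | rfl) <;>
      · rw [SetLike.mem_coe, Subgroup.mem_comap]
        simp only [MulEquiv.coe_toMonoidHom, MulAut.conj_apply, ← mul_assoc]
        assumption
  intro n hn
  have h := hle hn
  rw [Subgroup.mem_comap] at h
  simpa only [MulEquiv.coe_toMonoidHom, MulAut.conj_apply] using h

lemma conj_mem_N (g : SL2Z) : ∀ n ∈ N, g * n * g⁻¹ ∈ N := by
  have hg := mem_closure_ST g
  have key : (∀ n ∈ N, g * n * g⁻¹ ∈ N) ∧ (∀ n ∈ N, g⁻¹ * n * g⁻¹⁻¹ ∈ N) := by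
    clear hg
    induction mem_closure_ST g using Subgroup.closure_induction with
    | mem x hx =>
      rcases hx with rfl | rfl
      · exact ⟨conj_mem_of_gen _ (SCS ▸ inv_mem C_mem) (SDS ▸ inv_mem D_mem),
          conj_mem_of_gen _ (SCS' ▸ inv_mem C_mem) (SDS' ▸ inv_mem D_mem)⟩
      · exact ⟨conj_mem_of_gen _ (TCT ▸ D_mem) (TDT ▸ mul_mem D_mem (inv_mem C_mem)),
          conj_mem_of_gen _ (TCT' ▸ mul_mem (inv_mem D_mem) C_mem) (TDT' ▸ C_mem)⟩
    | one =>
      constructor <;> intro n hn <;> simpa using hn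
    | mul x y hx hy ihx ihy =>
      obtain ⟨ihx1, ihx2⟩ := ihx
      obtain ⟨ihy1, ihy2⟩ := ihy
      constructor
      · intro n hn
        have h : x * y * n * (x * y)⁻¹ = x * (y * n * y⁻¹) * x⁻¹ := by group
        rw [h]
        exact ihx1 _ (ihy1 _ hn)
      · intro n hn
        have h : (x * y)⁻¹ * n * (x * y)⁻¹⁻¹ = y⁻¹ * (x⁻¹ * n * x⁻¹⁻¹) * y⁻¹⁻¹ := by group
        rw [h]
        exact ihy2 _ (ihx2 _ hn)
    | inv x hx ihx =>
      obtain ⟨ihx1, ihx2⟩ := ihx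
      refine ⟨fun n hn => ihx2 n hn, fun n hn => ?_⟩
      have h : x⁻¹⁻¹ * n * x⁻¹⁻¹⁻¹ = x * n * x⁻¹ := by group
      rw [h]
      exact ihx1 n hn
  exact key.1

lemma conj_mem_N' (g : SL2Z) (n : SL2Z) (hn : n ∈ N) : g⁻¹ * n * g ∈ N := by
  have := conj_mem_N g⁻¹ n hn
  rwa [inv_inv] at this

instance : N.Normal := ⟨fun n hn g => conj_mem_N g n hn⟩

lemma commutator_ST_mem (h : SL2Z) : ⁅S, h⁆ ∈ N ∧ ⁅T, h⁆ ∈ N := by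
  induction mem_closure_ST h using Subgroup.closure_induction with
  | mem x hx =>
    rcases hx with rfl | rfl
    · refine ⟨by rw [show ⁅S, S⁆ = 1 by group]; exact one_mem N, ?_⟩
      rw [TS_comm]; exact D_mem
    · refine ⟨?_, by rw [show ⁅T, T⁆ = 1 by group]; exact one_mem N⟩
      rw [ST_comm]; exact inv_mem D_mem
  | one =>
    constructor <;> · rw [show ∀ g : SL2Z, ⁅g, (1 : SL2Z)⁆ = 1 from fun g => by group]
                      exact one_mem N
  | mul x y hx hy ihx ihy =>
    constructor
    · have h : ⁅S, x * y⁆ = ⁅S, x⁆ * (x * ⁅S, y⁆ * x⁻¹) := by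
        simp only [commutatorElement_def, mul_inv_rev, inv_inv]; group
      rw [h]; exact mul_mem ihx.1 (conj_mem_N x _ ihy.1)
    · have h : ⁅T, x * y⁆ = ⁅T, x⁆ * (x * ⁅T, y⁆ * x⁻¹) := by
        simp only [commutatorElement_def, mul_inv_rev, inv_inv]; group
      rw [h]; exact mul_mem ihx.2 (conj_mem_N x _ ihy.2)
  | inv x hx ihx =>
    constructor
    · have h : ⁅S, x⁻¹⁆ = x⁻¹ * ⁅S, x⁆⁻¹ * x := by
        simp only [commutatorElement_def, mul_inv_rev, inv_inv]; group
      rw [h]; exact conj_mem_N' x _ (inv_mem ihx.1)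
    · have h : ⁅T, x⁻¹⁆ = x⁻¹ * ⁅T, x⁆⁻¹ * x := by
        simp only [commutatorElement_def, mul_inv_rev, inv_inv]; group
      rw [h]; exact conj_mem_N' x _ (inv_mem ihx.2)

lemma commutator_mem_N (g h : SL2Z) : ⁅g, h⁆ ∈ N := by
  induction mem_closure_ST g using Subgroup.closure_induction with
  | mem x hx =>
    rcases hx with rfl | rfl
    · exact (commutator_ST_mem h).1
    · exact (commutator_ST_mem h).2
  | one =>
    rw [show ⁅(1 : SL2Z), h⁆ = 1 by group]; exact one_mem N
  | mul x y hx hy ihx ihy =>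
    have heq : ⁅x * y, h⁆ = x * ⁅y, h⁆ * x⁻¹ * ⁅x, h⁆ := by
      simp only [commutatorElement_def, mul_inv_rev, inv_inv]; group
    rw [heq]
    exact mul_mem (conj_mem_N x _ ihy) ihx
  | inv x hx ihx =>
    have heq : ⁅x⁻¹, h⁆ = x⁻¹ * ⁅x, h⁆⁻¹ * x := by
      simp only [commutatorElement_def, mul_inv_rev, inv_inv]; group
    rw [heq]
    exact conj_mem_N' x _ (inv_mem ihx)

lemma N_eq_commutator : N = commutator SL2Z := by
  apply le_antisymm
  · apply (Subgroup.closure_le _).mpr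
    rintro x (rfl | rfl)
    · show C ∈ commutator SL2Z
      rw [show C = T⁻¹ * ⁅T, S⁆ * T⁻¹⁻¹ from Subtype.ext (by decide)]
      exact Subgroup.Normal.conj_mem inferInstance _
        (Subgroup.commutator_mem_commutator (Subgroup.mem_top _) (Subgroup.mem_top _)) _
    · show D ∈ commutator SL2Z
      rw [← TS_comm]
      exact Subgroup.commutator_mem_commutator (Subgroup.mem_top _) (Subgroup.mem_top _)
  · rw [commutator_def]
    exact (Subgroup.commutator_le).mpr fun g _ h _ => commutator_mem_N g h


end Stmt19

/-- The commutator subgroup of `SL(2,ℤ)` is free on `C` and `D`: there is an injective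
homomorphism from the free group on two generators sending the generators to `C` and `D`,
whose range is exactly the commutator subgroup. -/
theorem stmt19 :
    ∃ φ : FreeGroup Bool →* SL2Z,
      Function.Injective φ ∧ φ (FreeGroup.of true) = C ∧ φ (FreeGroup.of false) = D ∧
        φ.range = commutator SL2Z := by
  refine ⟨FreeGroup.lift Stmt19.a, Stmt19.injective_lift, ?_, ?_, ?_⟩
  · rw [FreeGroup.lift_apply_of]; rfl
  · rw [FreeGroup.lift_apply_of]; rfl
  · rw [FreeGroup.range_lift_eq_closure]
    have hr : Set.range Stmt19.a = {C, D} := by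
      ext x
      constructor
      · rintro ⟨b, rfl⟩
        cases b
        · right; rfl
        · left; rfl
      · rintro (rfl | rfl)
        exacts [⟨true, rfl⟩, ⟨false, rfl⟩]
    rw [hr]
    exact Stmt19.N_eq_commutator
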